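/- Assume in addition that ū is bounded. Then the constructed solution satisfies, for all t ≥ 0 and all x ∈ ℝ, |u(t,x)| ≤ sup_{y∈ℝ}|ū(y)| + (t/4)·∫_ℝ ū_x(y)² dy; equivalently, for all t ≥ 0 and y ∈ ℝ, |ū(y) + ∫₀ᵗ φ(s,y) ds| ≤ ∥ū∥_{L^∞} + (t/4)·∥ū_x∥²_{L²}. -/

import Mathlib

open MeasureTheory

/-- `φ(t,y) = (1/4) ∫_{{ū_x > -2/t}} sign(y-x) ū_x(x)² dx` for `t ≠ 0`, and the full
integral `φ(0,y) = (1/4) ∫_ℝ sign(y-x) ū_x(x)² dx` at `t = 0`. -/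
noncomputable def phiHS (w : ℝ → ℝ) (t y : ℝ) : ℝ :=
  if t = 0 then (1 / 4) * ∫ x : ℝ, Real.sign (y - x) * (w x) ^ 2
  else (1 / 4) * ∫ x in {x : ℝ | w x > -2 / t}, Real.sign (y - x) * (w x) ^ 2

/-- The characteristic `ξ(t,y) = y + t ū(y) + ∫₀ᵗ (t-s) φ(s,y) ds`. -/
noncomputable def xiHS (u w : ℝ → ℝ) (t y : ℝ) : ℝ :=
  y + t * u y + ∫ s in (0 : ℝ)..t, (t - s) * phiHS w s y


lemma measurable_realSign : Measurable Real.sign := by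
  have h : Real.sign = fun r : ℝ => if r < 0 then (-1 : ℝ) else if 0 < r then 1 else 0 := by
    funext r; rfl
  rw [h]
  exact Measurable.ite measurableSet_Iio measurable_const
    (Measurable.ite measurableSet_Ioi measurable_const measurable_const)

lemma abs_realSign (r : ℝ) : |Real.sign r| ≤ 1 := by
  rcases Real.sign_apply_eq r with h | h | h <;> rw [h] <;> norm_num

/-- If the initial datum `ū` is bounded, the solution value along characteristics,
`u(t,ξ(t,y)) = ū(y) + ∫₀ᵗ φ(s,y) ds`, satisfies
`|u(t,x)| ≤ ‖ū‖_{L^∞} + (t/4) ‖ū_x‖²_{L²}` for all `t ≥ 0`. -/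
theorem solution_sup_bound (ubar ubarx : ℝ → ℝ)
    (hAC : ∀ a b : ℝ, a ≤ b → ubar b - ubar a = ∫ x in a..b, ubarx x)
    (hL2 : MemLp ubarx 2 (volume : Measure ℝ))
    (hbdd : BddAbove (Set.range fun x => |ubar x|)) :
    ∀ t : ℝ, 0 ≤ t → ∀ y : ℝ,
      |ubar y + ∫ s in (0 : ℝ)..t, phiHS ubarx s y| ≤
        (⨆ x : ℝ, |ubar x|) + (t / 4) * ∫ x : ℝ, (ubarx x) ^ 2 := by
  intro t ht y
  set I : ℝ := ∫ x : ℝ, (ubarx x) ^ 2 with hI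
  have hsq : Integrable (fun x => (ubarx x) ^ 2) := hL2.integrable_sq
  have hgmeas : AEStronglyMeasurable (fun x => Real.sign (y - x) * (ubarx x) ^ 2) volume := by
    exact ((measurable_realSign.comp (measurable_const.sub measurable_id)).aestronglyMeasurable.mul
      ((hL2.aestronglyMeasurable.mul hL2.aestronglyMeasurable).congr
        (by filter_upwards with x; rw [Pi.mul_apply, sq])))
  have hgbound : ∀ x : ℝ, ‖Real.sign (y - x) * (ubarx x) ^ 2‖ ≤ (ubarx x) ^ 2 := by
    intro x
    rw [norm_mul]
    calc ‖Real.sign (y - x)‖ * ‖(ubarx x) ^ 2‖ ≤ 1 * ‖(ubarx x) ^ 2‖ := by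
          gcongr; exact abs_realSign _
      _ = (ubarx x) ^ 2 := by rw [one_mul, Real.norm_eq_abs, abs_of_nonneg (sq_nonneg _)]
  have hgint : Integrable (fun x => Real.sign (y - x) * (ubarx x) ^ 2) :=
    hsq.mono' hgmeas (Filter.Eventually.of_forall hgbound)
  have hphi : ∀ s : ℝ, |phiHS ubarx s y| ≤ (1 / 4) * I := by
    intro s
    have key : ∀ S : Set ℝ, |∫ x in S, Real.sign (y - x) * (ubarx x) ^ 2| ≤ I := by
      intro S
      calc |∫ x in S, Real.sign (y - x) * (ubarx x) ^ 2|
          = ‖∫ x in S, Real.sign (y - x) * (ubarx x) ^ 2‖ := (Real.norm_eq_abs _).symm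
        _ ≤ ∫ x in S, ‖Real.sign (y - x) * (ubarx x) ^ 2‖ := norm_integral_le_integral_norm _
        _ ≤ ∫ x in S, (ubarx x) ^ 2 :=
            integral_mono hgint.restrict.norm hsq.restrict hgbound
        _ ≤ I := setIntegral_le_integral hsq (Filter.Eventually.of_forall fun x => sq_nonneg _)
    unfold phiHS
    split
    · rw [abs_mul]
      have h1 := key Set.univ
      rw [Measure.restrict_univ] at h1
      calc |(1:ℝ)/4| * |∫ x : ℝ, Real.sign (y - x) * (ubarx x) ^ 2|
          ≤ |(1:ℝ)/4| * I := mul_le_mul_of_nonneg_left h1 (abs_nonneg _)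
        _ = (1/4) * I := by norm_num
    · rw [abs_mul]
      calc |(1:ℝ)/4| * |∫ x in {x : ℝ | ubarx x > -2 / s}, Real.sign (y - x) * (ubarx x) ^ 2|
          ≤ |(1:ℝ)/4| * I := mul_le_mul_of_nonneg_left (key _) (abs_nonneg _)
        _ = (1/4) * I := by norm_num
  have hint : |∫ s in (0:ℝ)..t, phiHS ubarx s y| ≤ (1/4) * I * |t - 0| := by
    rw [← Real.norm_eq_abs]
    exact intervalIntegral.norm_integral_le_of_norm_le_const fun s _ =>
      (Real.norm_eq_abs _).symm ▸ hphi s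
  have hsup : |ubar y| ≤ ⨆ x : ℝ, |ubar x| := le_ciSup hbdd y
  calc |ubar y + ∫ s in (0:ℝ)..t, phiHS ubarx s y|
      ≤ |ubar y| + |∫ s in (0:ℝ)..t, phiHS ubarx s y| := abs_add_le _ _
    _ ≤ (⨆ x : ℝ, |ubar x|) + (1/4) * I * |t - 0| := add_le_add hsup hint
    _ = (⨆ x : ℝ, |ubar x|) + (t / 4) * I := by
        rw [sub_zero, abs_of_nonneg ht]; ring
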